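/- The family of all trees over ω containing a Miller tree, regarded as a subset of the Polish space Tree_ω, is Σ¹₁-complete: it is analytic, and for every Polish space Y and every analytic set B ⊆ Y there is a Borel measurable function f : Y → Tree_ω whose preimage of this family equals B. -/

import Mathlib

open MeasureTheory

/-- The Polish space `Tree_ω` of all trees over `ω`. -/
abbrev TreeOmega : Type :=
  {x : List ℕ → Bool // ∀ σ τ : List ℕ, x σ = true → τ <+: σ → x τ = true}

/-- `S ⊆ ω^{<ω}` is a tree: closed under initial segments. -/
def IsTreeSet (S : Set (List ℕ)) : Prop :=
  ∀ σ ∈ S, ∀ τ : List ℕ, τ <+: σ → τ ∈ S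

/-- A Miller tree: a nonempty tree in which every node extends to an
infinitely-splitting node. -/
def IsMillerTree (S : Set (List ℕ)) : Prop :=
  IsTreeSet S ∧ S.Nonempty ∧
    ∀ σ ∈ S, ∃ τ ∈ S, σ <+: τ ∧ {n : ℕ | τ ++ [n] ∈ S}.Infinite

/-- The family of all trees over `ω` containing a Miller tree. -/
def millerFam : Set TreeOmega :=
  {T | ∃ S : Set (List ℕ), IsMillerTree S ∧ S ⊆ {σ | T.1 σ = true}}

/-! ### Auxiliary instances for `TreeOmega` -/

instance : BorelSpace TreeOmega :=
  Subtype.borelSpace {x : List ℕ → Bool | ∀ σ τ : List ℕ, x σ = true → τ <+: σ → x τ = true}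

lemma isClosed_treeOmegaSet :
    IsClosed {x : List ℕ → Bool | ∀ σ τ : List ℕ, x σ = true → τ <+: σ → x τ = true} := by
  have hrw : {x : List ℕ → Bool | ∀ σ τ : List ℕ, x σ = true → τ <+: σ → x τ = true}
      = ⋂ (σ : List ℕ) (τ : List ℕ) (_ : τ <+: σ),
        ({x : List ℕ → Bool | x σ = true}ᶜ ∪ {x | x τ = true}) := by
    ext x
    simp only [Set.mem_setOf_eq, Set.mem_iInter, Set.mem_union, Set.mem_compl_iff]
    constructor
    · intro h σ τ hp; by_cases hσ : x σ = true
      · exact Or.inr (h σ τ hσ hp)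
      · exact Or.inl hσ
    · intro h σ τ hσ hp; rcases h σ τ hp with h1 | h1
      · exact absurd hσ h1
      · exact h1
  rw [hrw]
  refine isClosed_iInter fun σ => isClosed_iInter fun τ => isClosed_iInter fun _ => ?_
  have hc : ∀ ρ : List ℕ, IsClosed {x : List ℕ → Bool | x ρ = true} ∧
      IsOpen {x : List ℕ → Bool | x ρ = true} := by
    intro ρ
    have : {x : List ℕ → Bool | x ρ = true} = (fun x : List ℕ → Bool => x ρ) ⁻¹' {true} := rfl
    rw [this]
    exact ⟨(isClosed_discrete _).preimage (continuous_apply ρ),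
      (isOpen_discrete _).preimage (continuous_apply ρ)⟩
  exact IsClosed.union ((hc σ).2.isClosed_compl) (hc τ).1

instance : PolishSpace (List ℕ → Bool) := {}

instance : PolishSpace TreeOmega := isClosed_treeOmegaSet.polishSpace

/-! ### Part 1: `millerFam` is analytic -/

/-- The set of pairs `(T, g)` such that `g` codes a Miller tree contained in `T`. -/
def millerCondSet : Set (TreeOmega × (List ℕ → Bool)) :=
  {p | IsMillerTree {σ | p.2 σ = true} ∧ ∀ σ : List ℕ, p.2 σ = true → p.1.1 σ = true}

lemma measurableSet_millerCondSet : MeasurableSet millerCondSet := by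
  have e1 : ∀ σ : List ℕ,
      MeasurableSet {p : TreeOmega × (List ℕ → Bool) | p.1.1 σ = true} := by
    intro σ
    have m : Measurable fun p : TreeOmega × (List ℕ → Bool) => p.1.1 σ :=
      ((measurable_pi_apply σ).comp measurable_subtype_coe).comp measurable_fst
    have : {p : TreeOmega × (List ℕ → Bool) | p.1.1 σ = true} =
        (fun p : TreeOmega × (List ℕ → Bool) => p.1.1 σ) ⁻¹' {true} := rfl
    rw [this]
    exact m (measurableSet_singleton true)
  have e2 : ∀ σ : List ℕ,
      MeasurableSet {p : TreeOmega × (List ℕ → Bool) | p.2 σ = true} := by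
    intro σ
    have m : Measurable fun p : TreeOmega × (List ℕ → Bool) => p.2 σ :=
      (measurable_pi_apply σ).comp measurable_snd
    have : {p : TreeOmega × (List ℕ → Bool) | p.2 σ = true} =
        (fun p : TreeOmega × (List ℕ → Bool) => p.2 σ) ⁻¹' {true} := rfl
    rw [this]
    exact m (measurableSet_singleton true)
  have himp : ∀ (P Q : TreeOmega × (List ℕ → Bool) → Prop),
      MeasurableSet {x | P x} → MeasurableSet {x | Q x} →
        MeasurableSet {x | P x → Q x} := by
    intro P Q hP hQ
    have : {x : TreeOmega × (List ℕ → Bool) | P x → Q x} = {x | P x}ᶜ ∪ {x | Q x} := by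
      ext x; simp [imp_iff_not_or]
    rw [this]; exact hP.compl.union hQ
  have hrw : millerCondSet =
      {p : TreeOmega × (List ℕ → Bool) |
        (∀ σ : List ℕ, p.2 σ = true → ∀ τ : List ℕ, τ <+: σ → p.2 τ = true) ∧
        (∃ σ : List ℕ, p.2 σ = true) ∧
        (∀ σ : List ℕ, p.2 σ = true →
          ∃ τ : List ℕ, p.2 τ = true ∧ σ <+: τ ∧
            ∀ a : ℕ, ∃ b : ℕ, a < b ∧ p.2 (τ ++ [b]) = true) ∧
        (∀ σ : List ℕ, p.2 σ = true → p.1.1 σ = true)} := by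
    ext p
    simp only [millerCondSet, IsMillerTree, IsTreeSet, Set.mem_setOf_eq, Set.Nonempty,
      Set.infinite_iff_exists_gt]
    constructor
    · rintro ⟨⟨h1, h2, h3⟩, h4⟩
      refine ⟨h1, h2, fun σ hσ => ?_, h4⟩
      obtain ⟨τ, hτ, hpre, hinf⟩ := h3 σ hσ
      exact ⟨τ, hτ, hpre, fun a => by obtain ⟨b, hb, hab⟩ := hinf a; exact ⟨b, hab, hb⟩⟩
    · rintro ⟨h1, h2, h3, h4⟩
      refine ⟨⟨h1, h2, fun σ hσ => ?_⟩, h4⟩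
      obtain ⟨τ, hτ, hpre, hall⟩ := h3 σ hσ
      exact ⟨τ, hτ, hpre, fun a => by obtain ⟨b, hab, hb⟩ := hall a; exact ⟨b, hb, hab⟩⟩
  rw [hrw]
  simp only [Set.setOf_and]
  refine MeasurableSet.inter ?_ (MeasurableSet.inter ?_ (MeasurableSet.inter ?_ ?_))
  · simp only [Set.setOf_forall]
    refine MeasurableSet.iInter fun σ => himp _ _ (e2 σ) ?_
    simp only [Set.setOf_forall]
    exact MeasurableSet.iInter fun τ => MeasurableSet.iInter fun _ => e2 τ
  · simp only [Set.setOf_exists]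
    exact MeasurableSet.iUnion fun σ => e2 σ
  · simp only [Set.setOf_forall]
    refine MeasurableSet.iInter fun σ => himp _ _ (e2 σ) ?_
    simp only [Set.setOf_exists, Set.setOf_and, Set.setOf_forall]
    refine MeasurableSet.iUnion fun τ => (e2 τ).inter ((MeasurableSet.const _).inter ?_)
    exact MeasurableSet.iInter fun a => MeasurableSet.iUnion fun b =>
      (MeasurableSet.const _).inter (e2 (τ ++ [b]))
  · simp only [Set.setOf_forall]
    exact MeasurableSet.iInter fun σ => himp _ _ (e2 σ) (e1 σ)

lemma millerFam_eq_image : millerFam = Prod.fst '' millerCondSet := by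
  classical
  ext T
  constructor
  · rintro ⟨S, hS, hsub⟩
    refine ⟨(T, fun σ => decide (σ ∈ S)), ⟨?_, ?_⟩, rfl⟩
    · have hset : {σ : List ℕ | decide (σ ∈ S) = true} = S := by ext σ; simp
      show IsMillerTree {σ : List ℕ | decide (σ ∈ S) = true}
      rw [hset]; exact hS
    · intro σ hσ
      exact hsub (by simpa using hσ)
  · rintro ⟨p, ⟨hM, hsub⟩, rfl⟩
    exact ⟨{σ | p.2 σ = true}, hM, fun σ hσ => hsub σ hσ⟩

lemma analyticSet_millerFam : AnalyticSet millerFam := by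
  rw [millerFam_eq_image]
  exact measurableSet_millerCondSet.analyticSet.image_of_continuous continuous_fst

/-! ### Part 2: the reduction -/

section Reduction

variable {Y : Type} [MetricSpace Y]

/-- The basic condition used to define the reduction: there is a branch of Baire space whose
even coordinates extend those recorded in `σ`, mapped by `g` close to `y`. -/
def redCond (g : (ℕ → ℕ) → Y) (σ : List ℕ) (y : Y) : Prop :=
  ∃ x : ℕ → ℕ, (∀ i : ℕ, ∀ h : 2*i < σ.length, x i = σ[2*i]'h) ∧
    dist (g x) y < (1/2 : ℝ) ^ ((σ.length + 1)/2)

lemma redCond_mono {g : (ℕ → ℕ) → Y} {τ σ : List ℕ} {y : Y} (hpre : τ <+: σ)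
    (h : redCond g σ y) : redCond g τ y := by
  obtain ⟨x, hx, hd⟩ := h
  refine ⟨x, fun i h' => ?_, lt_of_lt_of_le hd ?_⟩
  · have h2 : 2*i < σ.length := lt_of_lt_of_le h' hpre.length_le
    rw [hx i h2]
    exact (hpre.getElem h').symm
  · apply pow_le_pow_of_le_one (by norm_num) (by norm_num)
    have := hpre.length_le; omega

lemma isOpen_redCond (g : (ℕ → ℕ) → Y) (σ : List ℕ) : IsOpen {y : Y | redCond g σ y} := by
  have hrw : {y : Y | redCond g σ y} =
      ⋃ (x : ℕ → ℕ) (_ : ∀ i : ℕ, ∀ h : 2*i < σ.length, x i = σ[2*i]'h),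
        Metric.ball (g x) ((1/2 : ℝ) ^ ((σ.length + 1)/2)) := by
    ext y
    simp only [Set.mem_iUnion, Metric.mem_ball, Set.mem_setOf_eq, redCond]
    constructor
    · rintro ⟨x, hx, hd⟩; exact ⟨x, hx, by rwa [dist_comm]⟩
    · rintro ⟨x, hx, hd⟩; exact ⟨x, hx, by rwa [dist_comm] at hd⟩
  rw [hrw]
  exact isOpen_iUnion fun x => isOpen_iUnion fun _ => Metric.isOpen_ball

/-- The canonical Miller tree witnessing `g x₀` : nodes whose even coordinates follow `x₀`. -/
def goodSet (x₀ : ℕ → ℕ) : Set (List ℕ) :=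
  {σ | ∀ i : ℕ, ∀ h : 2*i < σ.length, σ[2*i]'h = x₀ i}

lemma goodSet_extend {x₀ : ℕ → ℕ} {τ : List ℕ} (hτ : τ ∈ goodSet x₀)
    (hodd : τ.length % 2 = 1) (n : ℕ) : τ ++ [n] ∈ goodSet x₀ := by
  intro i h
  have hlen : (τ ++ [n]).length = τ.length + 1 := by simp
  have h2 : 2*i < τ.length := by omega
  have e := List.getElem_append_left (as := τ) (bs := [n]) h2 (h' := h)
  rw [e]
  exact hτ i h2

lemma goodSet_miller (x₀ : ℕ → ℕ) : IsMillerTree (goodSet x₀) := by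
  refine ⟨?_, ⟨[], by intro i h; simp at h⟩, ?_⟩
  · intro σ hσ τ hpre i h
    have h2 : 2*i < σ.length := lt_of_lt_of_le h hpre.length_le
    rw [hpre.getElem h]
    exact hσ i h2
  · intro σ hσ
    by_cases hpar : σ.length % 2 = 0
    · -- extend by the right value of x₀ to reach odd length
      set a := x₀ (σ.length / 2) with ha
      have hτS : σ ++ [a] ∈ goodSet x₀ := by
        intro i h
        have hlen : (σ ++ [a]).length = σ.length + 1 := by simp
        rcases Nat.lt_or_ge (2*i) σ.length with h2 | h2
        · have e := List.getElem_append_left (as := σ) (bs := [a]) h2 (h' := h)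
          rw [e]
          exact hσ i h2
        · have heq : 2*i = σ.length := by omega
          have := List.getElem_concat_length (l := σ) (a := a) (i := 2*i) heq (by omega)
          rw [this, ha]
          congr 1
          omega
      refine ⟨σ ++ [a], hτS, List.prefix_append σ [a], ?_⟩
      have hall : ∀ n : ℕ, (σ ++ [a]) ++ [n] ∈ goodSet x₀ := by
        intro n
        exact goodSet_extend hτS (by simp; omega) n
      have : {n : ℕ | (σ ++ [a]) ++ [n] ∈ goodSet x₀} = Set.univ :=
        Set.eq_univ_of_forall hall
      rw [this]; exact Set.infinite_univ
    · refine ⟨σ, hσ, List.prefix_refl σ, ?_⟩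
      have hall : ∀ n : ℕ, σ ++ [n] ∈ goodSet x₀ := fun n =>
        goodSet_extend hσ (by omega) n
      have : {n : ℕ | σ ++ [n] ∈ goodSet x₀} = Set.univ := Set.eq_univ_of_forall hall
      rw [this]; exact Set.infinite_univ

lemma goodSet_cond (g : (ℕ → ℕ) → Y) (x₀ : ℕ → ℕ) :
    ∀ σ ∈ goodSet x₀, redCond g σ (g x₀) := by
  intro σ hσ
  refine ⟨x₀, fun i h => (hσ i h).symm, ?_⟩
  rw [dist_self]
  positivity

/-- The key converse: if some Miller tree consists of nodes satisfying `redCond g · y`,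
then `y` is in the range of `g`. -/
lemma mem_range_of_miller {g : (ℕ → ℕ) → Y} (hg : Continuous g) {y : Y}
    {S : Set (List ℕ)} (hM : IsMillerTree S) (hsub : ∀ σ ∈ S, redCond g σ y) :
    ∃ x : ℕ → ℕ, g x = y := by
  classical
  obtain ⟨hStree, hSne, hSsplit⟩ := hM
  have step : ∀ σ ∈ S, ∃ τ, τ ∈ S ∧ σ <+: τ ∧ σ.length < τ.length := by
    intro σ hσ
    obtain ⟨τ', hτ', hpre, hinf⟩ := hSsplit σ hσ
    obtain ⟨n, hn⟩ := hinf.nonempty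
    refine ⟨τ' ++ [n], hn, hpre.trans (List.prefix_append τ' [n]), ?_⟩
    have := hpre.length_le
    simp only [List.length_append, List.length_cons, List.length_nil]
    omega
  obtain ⟨σ₀, hσ₀⟩ := hSne
  let seq : ℕ → {l : List ℕ // l ∈ S} := fun k =>
    Nat.rec ⟨σ₀, hσ₀⟩
      (fun _ p => ⟨(step p.1 p.2).choose, (step p.1 p.2).choose_spec.1⟩) k
  have hseq_succ : ∀ k : ℕ, (seq k).1 <+: (seq (k+1)).1 ∧
      (seq k).1.length < (seq (k+1)).1.length := by
    intro k
    exact ⟨(step (seq k).1 (seq k).2).choose_spec.2.1,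
      (step (seq k).1 (seq k).2).choose_spec.2.2⟩
  have hmono : ∀ k m : ℕ, k ≤ m → (seq k).1 <+: (seq m).1 := by
    intro k m hkm
    induction m with
    | zero =>
      have : k = 0 := Nat.le_zero.mp hkm
      subst this; exact List.prefix_refl _
    | succ m ih =>
      rcases Nat.lt_or_ge k (m+1) with h | h
      · exact (ih (Nat.lt_succ_iff.mp h)).trans (hseq_succ m).1
      · have : k = m + 1 := le_antisymm hkm h
        subst this; exact List.prefix_refl _
  have hlen : ∀ k : ℕ, k ≤ (seq k).1.length := by
    intro k
    induction k with
    | zero => exact Nat.zero_le _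
    | succ k ih => have := (hseq_succ k).2; omega
  have hxlt : ∀ i : ℕ, 2*i < (seq (2*i+2)).1.length := by
    intro i; have := hlen (2*i+2); omega
  set x : ℕ → ℕ := fun i => (seq (2*i+2)).1[2*i]'(hxlt i) with hxdef
  have hcoh : ∀ k i : ℕ, ∀ h : 2*i < (seq k).1.length, (seq k).1[2*i]'h = x i := by
    intro k i h
    have h1 := (hmono k (max k (2*i+2)) (le_max_left _ _)).getElem h
    have h2 := (hmono (2*i+2) (max k (2*i+2)) (le_max_right _ _)).getElem (hxlt i)
    show _ = (seq (2*i+2)).1[2*i]'(hxlt i)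
    rw [h1, h2]
  have hcond : ∀ n : ℕ, redCond g (seq (2*n)).1 y := fun n => hsub _ (seq (2*n)).2
  set xs : ℕ → ℕ → ℕ := fun n => (hcond n).choose with hxs_def
  have hxs : ∀ n : ℕ,
      (∀ i : ℕ, ∀ h : 2*i < (seq (2*n)).1.length, xs n i = (seq (2*n)).1[2*i]'h) ∧
      dist (g (xs n)) y < (1/2 : ℝ) ^ (((seq (2*n)).1.length + 1)/2) :=
    fun n => (hcond n).choose_spec
  refine ⟨x, ?_⟩
  have hx_tend : Filter.Tendsto xs Filter.atTop (nhds x) := by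
    rw [tendsto_pi_nhds]
    intro i
    refine Filter.Tendsto.congr' ?_ (tendsto_const_nhds (α := ℕ) (f := Filter.atTop))
    filter_upwards [Filter.eventually_ge_atTop (i+1)] with n hn
    have h2i : 2*i < (seq (2*n)).1.length := by
      have := hlen (2*n); omega
    rw [← hcoh (2*n) i h2i, (hxs n).1 i h2i]
  have hdist_bound : ∀ n : ℕ, dist (g (xs n)) y ≤ (1/2 : ℝ)^n := by
    intro n
    refine le_trans (hxs n).2.le ?_
    apply pow_le_pow_of_le_one (by norm_num) (by norm_num)
    have := hlen (2*n); omega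
  have h2 : Filter.Tendsto (fun n => g (xs n)) Filter.atTop (nhds (g x)) :=
    (hg.tendsto x).comp hx_tend
  have h3 : Filter.Tendsto (fun n => g (xs n)) Filter.atTop (nhds y) := by
    rw [tendsto_iff_dist_tendsto_zero]
    exact squeeze_zero (fun n => dist_nonneg) hdist_bound
      (tendsto_pow_atTop_nhds_zero_of_lt_one (by norm_num) (by norm_num))
  exact tendsto_nhds_unique h2 h3

end Reduction

/-- The family of trees containing a Miller tree is `Σ¹₁`-complete: it is analytic,
and every analytic subset of every Polish space Borel-reduces to it. -/
theorem millerFam_analytic_complete :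
    AnalyticSet millerFam ∧
      ∀ (Y : Type) [TopologicalSpace Y] [PolishSpace Y]
        [MeasurableSpace Y] [BorelSpace Y] (B : Set Y),
        AnalyticSet B →
          ∃ f : Y → TreeOmega, Measurable f ∧ f ⁻¹' millerFam = B := by
  classical
  refine ⟨analyticSet_millerFam, ?_⟩
  intro Y _ _ _ _ B hB
  rw [AnalyticSet] at hB
  rcases hB with rfl | ⟨g, gcont, grange⟩
  · refine ⟨fun _ => ⟨fun _ => false, fun σ τ h _ => by simp at h⟩, measurable_const, ?_⟩
    ext y
    simp only [Set.mem_preimage, Set.mem_empty_iff_false, iff_false]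
    rintro ⟨S, ⟨_, ⟨σ, hσ⟩, _⟩, hsub⟩
    simpa using hsub hσ
  · letI := TopologicalSpace.upgradeIsCompletelyMetrizable Y
    refine ⟨fun y => ⟨fun σ => decide (redCond g σ y),
      fun σ τ hσ hpre => decide_eq_true (redCond_mono hpre (of_decide_eq_true hσ))⟩, ?_, ?_⟩
    · refine Measurable.subtype_mk (measurable_pi_lambda _ fun σ => ?_)
      have heq : (fun y : Y => (decide (redCond g σ y) : Bool)) =
          fun y : Y => if redCond g σ y then true else false := by
        funext y; by_cases h : redCond g σ y <;> simp [h]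
      rw [heq]
      exact Measurable.ite (isOpen_redCond g σ).measurableSet measurable_const measurable_const
    · rw [← grange]
      ext y
      simp only [Set.mem_preimage, Set.mem_range]
      constructor
      · rintro ⟨S, hM, hsub⟩
        refine mem_range_of_miller gcont hM ?_
        intro σ hσ
        exact of_decide_eq_true (hsub hσ)
      · rintro ⟨x₀, rfl⟩
        refine ⟨goodSet x₀, goodSet_miller x₀, ?_⟩
        intro σ hσ
        exact decide_eq_true (goodSet_cond g x₀ σ hσ)
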